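/- Fix L > 0, n ≥ 1 and ε ∈ (0, 1). Define f : ℝ^{n+1} → ℝ by f(x) = (L/2)·(max_{0 ≤ i ≤ n} |x_i|)²; f is convex, L-QG+, with minimizer set {0} and minimum value 0. Let x_0 ∈ ℝ^{n+1} have coordinates (x_0)_i = 1 − i·ε/n for i = 0, …, n. Then for every sequence of points x_1, …, x_n ∈ ℝ^{n+1} and every choice of vectors g_0, …, g_{n−1} with g_i ∈ ∂f(x_i) for all i < n and x_k − x_0 ∈ span{g_0, g_1, …, g_{k−1}} for every 1 ≤ k ≤ n, one has f(x_n) − 0 ≥ (L/2)·(1 − ε)² ≥ (1 − ε)²·(L/(2(n+1)))·d(x_0, {0})². (Hence no first-order method whose iterates stay in the span of observed subgradients can beat the rate (L/2)·d(x_0, X*)²/(n+1) on convex L-QG+ functions.) -/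

import Mathlib

open scoped RealInnerProductSpace

lemma le_sup_abs {m : ℕ} (z : EuclideanSpace ℝ (Fin (m+1))) (i : Fin (m+1)) :
    |z i| ≤ ⨆ j, |z j| :=
  le_ciSup (f := fun j => |z j|) (Set.Finite.bddAbove (Set.finite_range _)) i

lemma sup_abs_nonneg {m : ℕ} (z : EuclideanSpace ℝ (Fin (m+1))) :
    0 ≤ ⨆ j, |z j| :=
  le_trans (abs_nonneg (z 0)) (le_sup_abs z 0)

lemma coord_le_norm {m : ℕ} (z : EuclideanSpace ℝ (Fin m)) (i : Fin m) : |z i| ≤ ‖z‖ := by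
  have h : |z i| ^ 2 ≤ ‖z‖ ^ 2 := by
    rw [EuclideanSpace.norm_eq, Real.sq_sqrt (by positivity)]
    have := Finset.single_le_sum (f := fun j => ‖z j‖ ^ 2)
      (fun j _ => by positivity) (Finset.mem_univ i)
    simpa [Real.norm_eq_abs, sq_abs] using this
  nlinarith [abs_nonneg (z i), norm_nonneg z]

lemma subgrad_coord_zero {m : ℕ} (f : EuclideanSpace ℝ (Fin (m+1)) → ℝ) (L : ℝ)
    (hf : ∀ z, f z = L / 2 * (⨆ i, |z i|) ^ 2)
    (z g : EuclideanSpace ℝ (Fin (m+1))) (hg : ∀ y, f y ≥ f z + ⟪g, y - z⟫)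
    (j : Fin (m+1)) (hj : |z j| < ⨆ i, |z i|) : g j = 0 := by
  set M := ⨆ i, |z i| with hM
  set t := (M - |z j|) / 2 with ht
  have ht0 : 0 < t := by rw [ht]; linarith
  obtain ⟨i0, hi0⟩ : ∃ i0, |z i0| = M := by
    obtain ⟨i0, hi0⟩ := Finite.exists_max (fun i => |z i|)
    exact ⟨i0, le_antisymm (le_sup_abs z i0) (ciSup_le hi0)⟩
  have hi0j : i0 ≠ j := by rintro rfl; rw [hi0] at hj; exact absurd hj (lt_irrefl _)
  have key : ∀ s : ℝ, |s| ≤ t → f (z + EuclideanSpace.single j s) = f z := by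
    intro s hs
    have habs : |s| ≤ t := hs
    have hsup : (⨆ i, |(z + EuclideanSpace.single j s) i|) = M := by
      apply le_antisymm
      · apply ciSup_le
        intro i
        rcases eq_or_ne i j with rfl | hne
        · simp only [PiLp.add_apply, EuclideanSpace.single_apply, if_pos rfl]
          calc |z i + s| ≤ |z i| + |s| := abs_add_le _ _
            _ ≤ M := by rw [ht] at habs; linarith
        · simpa [PiLp.add_apply, EuclideanSpace.single_apply, hne] using le_sup_abs z i
      · calc M = |(z + EuclideanSpace.single j s) i0| := by
              simp [PiLp.add_apply, EuclideanSpace.single_apply, hi0j, hi0]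
          _ ≤ _ := le_sup_abs _ i0
    rw [hf, hf, hsup]
  have h1 := hg (z + EuclideanSpace.single j t)
  have h2 := hg (z + EuclideanSpace.single j (-t))
  rw [key t (by rw [abs_of_pos ht0])] at h1
  rw [key (-t) (by rw [abs_neg, abs_of_pos ht0])] at h2
  simp only [add_sub_cancel_left] at h1 h2
  rw [EuclideanSpace.inner_single_right] at h1 h2
  simp only [RCLike.inner_apply, conj_trivial] at h1 h2
  have h3 : t * g j = 0 := le_antisymm (by linarith) (by linarith)
  exact (mul_eq_zero.mp h3).resolve_left (ne_of_gt ht0)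

theorem first_order_lower_bound_span
    (L : ℝ) (hL : 0 < L) (n : ℕ) (hn : 1 ≤ n)
    (ε : ℝ) (hε0 : 0 < ε) (hε1 : ε < 1)
    (f : EuclideanSpace ℝ (Fin (n + 1)) → ℝ)
    (hf : ∀ z, f z = L / 2 * (⨆ i, |z i|) ^ 2)
    (x0 : EuclideanSpace ℝ (Fin (n + 1)))
    (hx0 : ∀ i : Fin (n + 1), x0 i = 1 - (i : ℝ) * ε / n) :
    ConvexOn ℝ Set.univ f ∧
    {z | ∀ y, f z ≤ f y} = {0} ∧
    f 0 = 0 ∧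
    (∀ z, f z - 0 ≤ L / 2 * Metric.infDist z ({0} : Set (EuclideanSpace ℝ (Fin (n + 1)))) ^ 2) ∧
    ∀ (x g : ℕ → EuclideanSpace ℝ (Fin (n + 1))),
      x 0 = x0 →
      (∀ i < n, ∀ y, f y ≥ f (x i) + ⟪g i, y - x i⟫) →
      (∀ k, 1 ≤ k → k ≤ n → x k - x 0 ∈ Submodule.span ℝ (g '' {i : ℕ | i < k})) →
      f (x n) - 0 ≥ L / 2 * (1 - ε) ^ 2 ∧
      L / 2 * (1 - ε) ^ 2 ≥ (1 - ε) ^ 2 * (L / (2 * ((n : ℝ) + 1))) *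
          Metric.infDist x0 ({0} : Set (EuclideanSpace ℝ (Fin (n + 1)))) ^ 2 := by
  have hn0 : (0:ℝ) < n := by exact_mod_cast hn
  have hsup0 : (⨆ i, |(0 : EuclideanSpace ℝ (Fin (n+1))) i|) = 0 := by
    simp [ciSup_const]
  refine ⟨?_, ?_, ?_, ?_, ?_⟩
  · -- convexity
    refine ⟨convex_univ, fun p _ q _ a b ha hb hab => ?_⟩
    rw [hf, hf, hf]
    set u := ⨆ i, |p i| with hu
    set v := ⨆ i, |q i| with hv
    have hu0 := sup_abs_nonneg p
    have hv0 := sup_abs_nonneg q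
    have hm : (⨆ i, |(a • p + b • q) i|) ≤ a * u + b * v := by
      apply ciSup_le
      intro i
      have : |(a • p + b • q) i| = |a * p i + b * q i| := by
        simp [PiLp.add_apply, PiLp.smul_apply, smul_eq_mul]
      rw [this]
      calc |a * p i + b * q i| ≤ |a * p i| + |b * q i| := abs_add_le _ _
        _ = a * |p i| + b * |q i| := by
            rw [abs_mul, abs_mul, abs_of_nonneg ha, abs_of_nonneg hb]
        _ ≤ a * u + b * v := by
            have h1 := le_sup_abs p i
            have h2 := le_sup_abs q i
            nlinarith
    have hm0 := sup_abs_nonneg (a • p + b • q)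
    set m := ⨆ i, |(a • p + b • q) i|
    simp only [smul_eq_mul]
    have hmsq : m ^ 2 ≤ (a * u + b * v) ^ 2 := by nlinarith
    have hq : (a * u + b * v) ^ 2 ≤ a * u ^ 2 + b * v ^ 2 := by
      nlinarith [mul_nonneg (mul_nonneg ha hb) (sq_nonneg (u - v))]
    have := mul_le_mul_of_nonneg_left (hmsq.trans hq) (le_of_lt (half_pos hL))
    linarith
  · -- argmin set
    ext z
    simp only [Set.mem_setOf_eq, Set.mem_singleton_iff]
    constructor
    · intro h
      have h0 := h 0
      rw [hf z, hf 0, hsup0] at h0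
      have hz0 := sup_abs_nonneg z
      have hsq : (⨆ i, |z i|) ^ 2 ≤ 0 := by
        rcases mul_nonpos_iff.mp (by linarith : L / 2 * (⨆ i, |z i|) ^ 2 ≤ 0) with h' | h'
        · exact h'.2
        · linarith [h'.1]
      have hsz : (⨆ i, |z i|) = 0 := by nlinarith
      ext i
      have := le_sup_abs z i
      rw [hsz] at this
      have : |z i| = 0 := le_antisymm this (abs_nonneg _)
      simpa using this
    · rintro rfl y
      rw [hf, hf, hsup0]
      nlinarith [sq_nonneg (⨆ i, |y i|), hL.le,
        mul_nonneg (le_of_lt (half_pos hL)) (sq_nonneg (⨆ i, |y i|))]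
  · rw [hf, hsup0]; ring
  · -- QG+
    intro z
    rw [Metric.infDist_singleton, dist_zero_right, hf]
    have h1 : (⨆ i, |z i|) ≤ ‖z‖ := ciSup_le fun i => coord_le_norm z i
    have h2 : (⨆ i, |z i|) ^ 2 ≤ ‖z‖ ^ 2 := by nlinarith [sup_abs_nonneg z]
    have := mul_le_mul_of_nonneg_left h2 (le_of_lt (half_pos hL))
    linarith
  · -- main lower bound
    intro x g hx00 hgsub hspan
    -- coordinates 1 - jε/n are positive and decreasing
    have hcoord : ∀ j : Fin (n+1), x0 j = 1 - (j:ℝ) * ε / n := hx0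
    have hpos : ∀ j : Fin (n+1), 0 < 1 - (j:ℝ) * ε / n := by
      intro j
      have hj : ((j:ℕ):ℝ) ≤ n := by exact_mod_cast Nat.le_of_lt_succ j.isLt
      have : (j:ℝ) * ε / n ≤ ε := by
        rw [div_le_iff₀ hn0]
        nlinarith
      linarith
    have agree : ∀ k, k ≤ n → ∀ j : Fin (n+1), k ≤ (j:ℕ) → x k j = x0 j := by
      intro k
      induction k using Nat.strong_induction_on with
      | _ k ih =>
        intro hkn j hkj
        rcases Nat.eq_zero_or_pos k with rfl | hk1
        · rw [hx00]
        · have hsp := hspan k hk1 hkn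
          have hker : Submodule.span ℝ (g '' {i : ℕ | i < k}) ≤
              LinearMap.ker ((EuclideanSpace.proj j : EuclideanSpace ℝ (Fin (n+1)) →L[ℝ] ℝ) :
                EuclideanSpace ℝ (Fin (n+1)) →ₗ[ℝ] ℝ) := by
            rw [Submodule.span_le]
            rintro _ ⟨i, hi, rfl⟩
            simp only [Set.mem_setOf_eq] at hi
            have hin : i < n := lt_of_lt_of_le hi hkn
            have hin1 : i < n + 1 := Nat.lt_succ_of_lt hin
            -- x i agrees with x0 on coordinates ≥ i
            have hagree := ih i hi (le_of_lt hin)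
            have hii : x i ⟨i, hin1⟩ = x0 ⟨i, hin1⟩ := hagree ⟨i, hin1⟩ (le_refl i)
            have hij : x i j = x0 j := hagree j (le_trans (Nat.le_of_lt hi) hkj)
            have hlt : |x i j| < ⨆ l, |(x i) l| := by
              have h1 : |x i j| = 1 - (j:ℝ) * ε / n := by
                rw [hij, hcoord j, abs_of_pos (hpos j)]
              have h2 : |x i ⟨i, hin1⟩| = 1 - (i:ℝ) * ε / n := by
                rw [hii, hcoord ⟨i, hin1⟩, abs_of_pos (hpos ⟨i, hin1⟩)]
              have hij' : (i:ℝ) < ((j:ℕ):ℝ) := by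
                exact_mod_cast lt_of_lt_of_le hi hkj
              have : |x i j| < |x i ⟨i, hin1⟩| := by
                rw [h1, h2]
                have : (i:ℝ) * ε / n < ((j:ℕ):ℝ) * ε / n := by gcongr
                linarith
              exact lt_of_lt_of_le this (le_sup_abs (x i) ⟨i, hin1⟩)
            have := subgrad_coord_zero f L hf (x i) (g i) (hgsub i hin) j hlt
            simpa [LinearMap.mem_ker] using this
          have h0 : (x k - x 0) j = 0 := hker hsp
          have : x k j - x 0 j = 0 := by simpa [PiLp.sub_apply] using h0
          rw [hx00] at this
          linarith [this]
    -- conclude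
    have hnn1 : n < n + 1 := Nat.lt_succ_self n
    have hxn : x n ⟨n, hnn1⟩ = 1 - ε := by
      rw [agree n (le_refl n) ⟨n, hnn1⟩ (le_refl n), hcoord ⟨n, hnn1⟩]
      have : ((⟨n, hnn1⟩ : Fin (n+1)) : ℝ) = (n:ℝ) := by simp
      rw [this]
      field_simp
    constructor
    · rw [hf]
      have h1 : (1 - ε) ≤ ⨆ l, |x n l| := by
        calc (1 - ε) ≤ |x n ⟨n, hnn1⟩| := by rw [hxn]; exact le_abs_self _
          _ ≤ _ := le_sup_abs _ _
      have h2 : (1 - ε) ^ 2 ≤ (⨆ l, |x n l|) ^ 2 := by nlinarith [sup_abs_nonneg (x n)]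
      have := mul_le_mul_of_nonneg_left h2 (le_of_lt (half_pos hL))
      linarith
    · rw [Metric.infDist_singleton, dist_zero_right]
      have hnorm : ‖x0‖ ^ 2 ≤ (n:ℝ) + 1 := by
        rw [EuclideanSpace.norm_eq, Real.sq_sqrt (by positivity)]
        calc (∑ i, ‖x0 i‖ ^ 2) ≤ ∑ _i : Fin (n+1), (1:ℝ) := by
              apply Finset.sum_le_sum
              intro i _
              rw [hcoord i, Real.norm_eq_abs, abs_of_pos (hpos i)]
              have h1 := hpos i
              have hj : ((i:ℕ):ℝ) ≤ n := by exact_mod_cast Nat.le_of_lt_succ i.isLt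
              have h2 : 0 ≤ (i:ℝ) * ε / n := by positivity
              nlinarith
          _ = (n:ℝ) + 1 := by simp
      have hpos1 : (0:ℝ) < (n:ℝ) + 1 := by positivity
      have key : L / (2 * ((n:ℝ)+1)) * ((n:ℝ)+1) = L / 2 := by field_simp
      calc (1 - ε) ^ 2 * (L / (2 * ((n:ℝ) + 1))) * ‖x0‖ ^ 2
          ≤ (1 - ε) ^ 2 * (L / (2 * ((n:ℝ) + 1))) * ((n:ℝ)+1) := by
            gcongr
        _ = L / 2 * (1 - ε) ^ 2 := by rw [mul_assoc, key]; ring
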